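/- Let χ : ℝⁿ → ℝ be measurable, integrable on ℝⁿ, with m_0(χ) < ∞. Let 1 ≤ p < ∞ and f ∈ L^p(ℝⁿ). Then for every w > 0 the function S_w f is well-defined almost everywhere, belongs to L^p(ℝⁿ), and ‖S_w f‖_p ≤ m_0(χ)^{(p−1)/p} · ‖χ‖_1^{1/p} · ‖f‖_p. -/

import Mathlib

open MeasureTheory Filter
open scoped NNReal ENNReal

noncomputable def latticePt (n : ℕ) (k : Fin n → ℤ) : EuclideanSpace ℝ (Fin n) :=
  WithLp.toLp 2 (fun i => (k i : ℝ))

/-- Discrete absolute moment of order `β`. -/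
noncomputable def mom (n : ℕ) (χ : EuclideanSpace ℝ (Fin n) → ℝ) (β : ℝ) : ENNReal :=
  ⨆ u : EuclideanSpace ℝ (Fin n), ∑' k : Fin n → ℤ,
    ENNReal.ofReal (|χ (u - latticePt n k)| * ‖u - latticePt n k‖ ^ β)

/-- The cell `R_k^w`. -/
def cell (n : ℕ) (w : ℝ) (k : Fin n → ℤ) : Set (EuclideanSpace ℝ (Fin n)) :=
  {u | ∀ i, u i ∈ Set.Icc ((k i : ℝ) / w) (((k i : ℝ) + 1) / w)}

/-- Sampling Kantorovich operator. -/
noncomputable def SK (n : ℕ) (χ f : EuclideanSpace ℝ (Fin n) → ℝ) (w : ℝ)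
    (x : EuclideanSpace ℝ (Fin n)) : ℝ :=
  ∑' k : Fin n → ℤ, χ (w • x - latticePt n k) * (w ^ n * ∫ u in cell n w k, f u)

section Aux

def halfCell (n : ℕ) (w : ℝ) (k : Fin n → ℤ) : Set (EuclideanSpace ℝ (Fin n)) :=
  {u | ∀ i, u i ∈ Set.Ico ((k i : ℝ) / w) (((k i : ℝ) + 1) / w)}

lemma measurable_eval (n : ℕ) (i : Fin n) :
    Measurable fun (x : EuclideanSpace ℝ (Fin n)) => x i :=
  (measurable_pi_apply i).comp (MeasurableEquiv.toLp 2 (Fin n → ℝ)).symm.measurable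

lemma cell_measurable (n : ℕ) (w : ℝ) (k : Fin n → ℤ) : MeasurableSet (cell n w k) := by
  have : cell n w k = ⋂ i, (fun x : EuclideanSpace ℝ (Fin n) => x i) ⁻¹'
      Set.Icc ((k i : ℝ) / w) (((k i : ℝ) + 1) / w) := by
    ext x; simp [cell, Set.mem_iInter]
  rw [this]
  exact MeasurableSet.iInter fun i => (measurable_eval n i) measurableSet_Icc

lemma halfCell_measurable (n : ℕ) (w : ℝ) (k : Fin n → ℤ) : MeasurableSet (halfCell n w k) := by
  have : halfCell n w k = ⋂ i, (fun x : EuclideanSpace ℝ (Fin n) => x i) ⁻¹'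
      Set.Ico ((k i : ℝ) / w) (((k i : ℝ) + 1) / w) := by
    ext x; simp [halfCell, Set.mem_iInter]
  rw [this]
  exact MeasurableSet.iInter fun i => (measurable_eval n i) measurableSet_Ico

lemma mem_halfCell_iff (n : ℕ) {w : ℝ} (hw : 0 < w) (k : Fin n → ℤ)
    (x : EuclideanSpace ℝ (Fin n)) :
    x ∈ halfCell n w k ↔ ∀ i, ⌊w * x i⌋ = k i := by
  unfold halfCell
  simp only [Set.mem_setOf_eq, Set.mem_Ico]
  refine forall_congr' fun i => ?_
  rw [Int.floor_eq_iff, div_le_iff₀ hw, lt_div_iff₀ hw]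
  constructor
  · rintro ⟨h1, h2⟩; exact ⟨by linarith [mul_comm w (x i)], by rw [mul_comm]; linarith⟩
  · rintro ⟨h1, h2⟩; exact ⟨by rw [mul_comm] at h1; linarith, by rw [mul_comm] at h2; linarith⟩

lemma hyperplane_null (n : ℕ) (i : Fin n) (c : ℝ) :
    volume {x : EuclideanSpace ℝ (Fin n) | x i = c} = 0 := by
  classical
  have he := EuclideanSpace.volume_preserving_symm_measurableEquiv_toLp (Fin n)
  have : {x : EuclideanSpace ℝ (Fin n) | x i = c} =
      (MeasurableEquiv.toLp 2 (Fin n → ℝ)).symm ⁻¹'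
        (Set.pi Set.univ (fun j => if j = i then {c} else Set.univ)) := by
    ext x
    simp only [Set.mem_preimage, Set.mem_pi, Set.mem_univ, forall_true_left, Set.mem_setOf_eq]
    constructor
    · intro h j; by_cases hj : j = i <;>
        simp [hj, h, MeasurableEquiv.coe_toLp_symm]
    · intro h; have := h i; simpa [MeasurableEquiv.coe_toLp_symm] using this
  rw [this, he.measure_preimage]
  · rw [volume_pi_pi]
    refine Finset.prod_eq_zero (Finset.mem_univ i) ?_
    simp
  · refine (MeasurableSet.univ_pi fun j => ?_).nullMeasurableSet
    by_cases hj : j = i <;> simp [hj]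

lemma cell_ae_eq (n : ℕ) {w : ℝ} (hw : 0 < w) (k : Fin n → ℤ) :
    (cell n w k : Set (EuclideanSpace ℝ (Fin n))) =ᵐ[volume] halfCell n w k := by
  have hsub : halfCell n w k ⊆ cell n w k := fun x hx i => Set.Ico_subset_Icc_self (hx i)
  have hdiff : cell n w k \ halfCell n w k ⊆
      ⋃ i, {x : EuclideanSpace ℝ (Fin n) | x i = ((k i : ℝ) + 1) / w} := by
    rintro x ⟨hc, hh⟩
    simp only [halfCell, Set.mem_setOf_eq, not_forall] at hh
    obtain ⟨i, hi⟩ := hh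
    refine Set.mem_iUnion.2 ⟨i, ?_⟩
    have := hc i
    simp only [Set.mem_Icc] at this
    simp only [Set.mem_Ico, not_and, not_lt] at hi
    exact le_antisymm this.2 (hi this.1)
  have h0 : volume (cell n w k \ halfCell n w k) = 0 := by
    refine measure_mono_null hdiff ?_
    refine measure_iUnion_null fun i => hyperplane_null n i _
  rw [MeasureTheory.ae_eq_set]
  refine ⟨h0, ?_⟩
  rw [Set.diff_eq_empty.2 hsub]
  simp

lemma tile_halfCell (n : ℕ) {w : ℝ} (hw : 0 < w) (g : EuclideanSpace ℝ (Fin n) → ℝ≥0∞)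
    (hg : AEMeasurable g) :
    ∑' k : Fin n → ℤ, ∫⁻ x in halfCell n w k, g x = ∫⁻ x, g x := by
  have h1 : ∀ k : Fin n → ℤ, ∫⁻ x in halfCell n w k, g x
      = ∫⁻ x, (halfCell n w k).indicator g x := fun k =>
    (lintegral_indicator (halfCell_measurable n w k) g).symm
  simp_rw [h1]
  rw [← lintegral_tsum fun k => (hg.indicator (halfCell_measurable n w k))]
  refine lintegral_congr fun x => ?_
  have : ∑' k : Fin n → ℤ, (halfCell n w k).indicator g x = g x := by
    rw [tsum_eq_single (fun i => ⌊w * x i⌋)]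
    · rw [Set.indicator_of_mem]
      rw [mem_halfCell_iff n hw]
      exact fun i => rfl
    · intro k hk
      rw [Set.indicator_of_notMem]
      rw [mem_halfCell_iff n hw]
      intro h
      exact hk (funext fun i => (h i).symm)
  rw [this]

lemma tile_cell (n : ℕ) {w : ℝ} (hw : 0 < w) (g : EuclideanSpace ℝ (Fin n) → ℝ≥0∞)
    (hg : AEMeasurable g) :
    ∑' k : Fin n → ℤ, ∫⁻ x in cell n w k, g x = ∫⁻ x, g x := by
  rw [← tile_halfCell n hw g hg]
  exact tsum_congr fun k => setLIntegral_congr (cell_ae_eq n hw k)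

lemma cell_volume (n : ℕ) {w : ℝ} (hw : 0 < w) (k : Fin n → ℤ) :
    volume (cell n w k) = ENNReal.ofReal (1 / w) ^ n := by
  classical
  have he := EuclideanSpace.volume_preserving_symm_measurableEquiv_toLp (Fin n)
  have hc : cell n w k = (MeasurableEquiv.toLp 2 (Fin n → ℝ)).symm ⁻¹'
      (Set.pi Set.univ (fun i => Set.Icc ((k i : ℝ) / w) (((k i : ℝ) + 1) / w))) := by
    ext x
    simp [cell, Set.mem_univ_pi, MeasurableEquiv.coe_toLp_symm,
      -Set.pi_univ_Icc]
  rw [hc, he.measure_preimage]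
  · rw [volume_pi_pi]
    have : ∀ i : Fin n, volume (Set.Icc ((k i : ℝ) / w) (((k i : ℝ) + 1) / w))
        = ENNReal.ofReal (1 / w) := by
      intro i
      rw [Real.volume_Icc]
      congr 1
      field_simp; ring
    simp [this]
  · exact (MeasurableSet.univ_pi fun i => measurableSet_Icc).nullMeasurableSet

lemma lint_scale (n : ℕ) (g : EuclideanSpace ℝ (Fin n) → ℝ≥0∞) (hg : Measurable g)
    (c : EuclideanSpace ℝ (Fin n)) (w : ℝ) (hw : 0 < w) :
    ∫⁻ x, g (w • x - c) = ENNReal.ofReal ((w ^ n)⁻¹) * ∫⁻ x, g x := by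
  have hh : Measurable fun y : EuclideanSpace ℝ (Fin n) => g (y - c) := by fun_prop
  calc ∫⁻ x, g (w • x - c) = ∫⁻ x, (fun y => g (y - c)) (w • x) := rfl
    _ = ∫⁻ y, g (y - c) ∂(Measure.map (fun x : EuclideanSpace ℝ (Fin n) => w • x) volume) :=
        (lintegral_map hh (by fun_prop)).symm
    _ = ENNReal.ofReal ((w ^ n)⁻¹) * ∫⁻ y, g (y - c) := by
        rw [Measure.map_addHaar_smul volume (ne_of_gt hw), lintegral_smul_measure,
          finrank_euclideanSpace_fin, abs_of_nonneg (by positivity), smul_eq_mul]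
    _ = ENNReal.ofReal ((w ^ n)⁻¹) * ∫⁻ x, g x := by
        congr 1
        calc ∫⁻ y, g (y - c) = ∫⁻ y, g (y + -c) := by simp [sub_eq_add_neg]
          _ = ∫⁻ x, g x := lintegral_add_right_eq_self g (-c)

lemma tsum_inner_le_weight {ι : Type*} (w f : ι → ℝ≥0∞) {p : ℝ} (hp : 1 ≤ p) :
    ∑' i, w i * f i ≤ (∑' i, w i) ^ (1 - p⁻¹) * (∑' i, w i * f i ^ p) ^ p⁻¹ := by
  rw [ENNReal.tsum_eq_iSup_sum]
  refine iSup_le fun s => ?_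
  refine (ENNReal.inner_le_weight_mul_Lp_of_nonneg s hp w f).trans ?_
  refine mul_le_mul' (ENNReal.rpow_le_rpow (ENNReal.sum_le_tsum s)
    (sub_nonneg.2 (inv_le_one_of_one_le₀ hp)))
    (ENNReal.rpow_le_rpow (ENNReal.sum_le_tsum s) (inv_nonneg.2 (le_trans zero_le_one hp)))

lemma tsum_pow_le {ι : Type*} (w f : ι → ℝ≥0∞) {p : ℝ} (hp : 1 ≤ p) :
    (∑' i, w i * f i) ^ p ≤ (∑' i, w i) ^ (p - 1) * ∑' i, w i * f i ^ p := by
  have hp0 : (0:ℝ) < p := lt_of_lt_of_le zero_lt_one hp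
  calc (∑' i, w i * f i) ^ p
      ≤ ((∑' i, w i) ^ (1 - p⁻¹) * (∑' i, w i * f i ^ p) ^ p⁻¹) ^ p :=
        ENNReal.rpow_le_rpow (tsum_inner_le_weight w f hp) hp0.le
    _ = (∑' i, w i) ^ (p - 1) * ∑' i, w i * f i ^ p := by
        rw [ENNReal.mul_rpow_of_nonneg _ _ hp0.le, ← ENNReal.rpow_mul, ← ENNReal.rpow_mul,
          sub_mul, one_mul, inv_mul_cancel₀ hp0.ne', ENNReal.rpow_one]

lemma enorm_tsum_le' {ι : Type*} [Countable ι] (g : ι → ℝ) :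
    ENNReal.ofReal |∑' k, g k| ≤ ∑' k, ENNReal.ofReal |g k| := by
  have key : ∀ r : ℝ, ENNReal.ofReal |r| = (‖r‖₊ : ℝ≥0∞) := fun r => by
    rw [← Real.norm_eq_abs, ofReal_norm, enorm_eq_nnnorm]
  simp_rw [key]
  by_cases H : (∑' k, (‖g k‖₊ : ℝ≥0∞)) = ⊤
  · rw [H]; exact le_top
  · have hs : Summable fun k => ‖g k‖₊ := ENNReal.tsum_coe_ne_top_iff_summable.1 H
    calc ((‖∑' k, g k‖₊ : ℝ≥0∞)) ≤ (((∑' k, ‖g k‖₊ : ℝ≥0)) : ℝ≥0∞) :=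
          ENNReal.coe_le_coe.2 (nnnorm_tsum_le hs)
      _ = ∑' k, ((‖g k‖₊ : ℝ≥0) : ℝ≥0∞) := ENNReal.coe_tsum hs

lemma sk_aestronglyMeasurable {ι : Type*} [Countable ι] {α : Type*} [MeasurableSpace α]
    (μ : Measure α) (g : ι → α → ℝ) (hg : ∀ k, Measurable (g k))
    (hae : ∀ᵐ x ∂μ, Summable fun k => g k x) :
    AEStronglyMeasurable (fun x => ∑' k, g k x) μ := by
  classical
  have : Encodable ι := Encodable.ofCountable ι
  set T : ℕ → Finset ι := fun j => (Finset.range j).preimage Encodable.encode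
    (Encodable.encode_injective.injOn) with hT
  have hmem : ∀ (x : ι) (j : ℕ), x ∈ T j ↔ Encodable.encode x < j := by
    intro x j
    simp [hT, Finset.mem_preimage]
  have hmono : Monotone T := fun a b hab x hx => by
    rw [hmem] at hx ⊢; omega
  have hTend : Filter.Tendsto T Filter.atTop Filter.atTop :=
    Filter.tendsto_atTop_finset_of_monotone hmono
      (fun x => ⟨Encodable.encode x + 1, (hmem x _).2 (Nat.lt_succ_self _)⟩)
  refine aestronglyMeasurable_of_tendsto_ae (u := Filter.atTop (α := ℕ))
    (f := fun j x => ∑ k ∈ T j, g k x) ?_ ?_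
  · exact fun j => (Finset.measurable_sum (T j) fun k _ => hg k).aestronglyMeasurable
  · exact hae.mono fun x hsum => hsum.hasSum.comp hTend

end Aux

lemma Abound (n : ℕ) {w : ℝ} (hw : 0 < w) {p : ℝ} (hp : 1 ≤ p)
    (f : EuclideanSpace ℝ (Fin n) → ℝ) (hf : MemLp f (ENNReal.ofReal p)) (k : Fin n → ℤ) :
    ENNReal.ofReal |w ^ n * ∫ u in cell n w k, f u| ^ p ≤
      ENNReal.ofReal w ^ n * ∫⁻ x in cell n w k, (‖f x‖₊ : ℝ≥0∞) ^ p := by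
  have hp0 : (0:ℝ) < p := lt_of_lt_of_le zero_lt_one hp
  have hP0 : ENNReal.ofReal p ≠ 0 := by
    simp only [ne_eq, ENNReal.ofReal_eq_zero, not_le]; linarith
  have hPt : ENNReal.ofReal p ≠ ⊤ := ENNReal.ofReal_ne_top
  set W : ℝ≥0∞ := ENNReal.ofReal w with hWdef
  set V : ℝ≥0∞ := W ^ n with hVdef
  have hV0 : V ≠ 0 := pow_ne_zero _ (by simpa [hWdef] using (ENNReal.ofReal_pos.2 hw).ne')
  have hVt : V ≠ ⊤ := ENNReal.pow_ne_top ENNReal.ofReal_ne_top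
  set I : ℝ≥0∞ := ∫⁻ x in cell n w k, (‖f x‖₊ : ℝ≥0∞) ^ p with hIdef
  have hμuniv : (volume.restrict (cell n w k)) Set.univ = V⁻¹ := by
    rw [Measure.restrict_apply_univ, cell_volume n hw, hVdef, hWdef, ENNReal.inv_pow, one_div,
      ENNReal.ofReal_inv_of_pos hw]
  have h5 : eLpNorm f (ENNReal.ofReal p) (volume.restrict (cell n w k)) = I ^ (1/p) := by
    rw [eLpNorm_eq_lintegral_rpow_enorm_toReal hP0 hPt, ENNReal.toReal_ofReal hp0.le]; rfl
  have h4 : eLpNorm f 1 (volume.restrict (cell n w k)) ≤ I ^ (1/p) * V⁻¹ ^ (1 - 1/p) := by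
    have := eLpNorm_le_eLpNorm_mul_rpow_measure_univ (p := 1) (q := ENNReal.ofReal p)
      (by simpa using ENNReal.one_le_ofReal.2 hp) (hf.1.restrict (s := cell n w k))
    rw [hμuniv, h5] at this
    simpa [ENNReal.toReal_ofReal hp0.le] using this
  have base : ENNReal.ofReal |w ^ n * ∫ u in cell n w k, f u| ≤
      V * (I ^ (1/p) * V⁻¹ ^ (1 - 1/p)) := by
    rw [abs_mul, abs_of_nonneg (by positivity : (0:ℝ) ≤ w ^ n),
      ENNReal.ofReal_mul (by positivity), ENNReal.ofReal_pow hw.le]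
    refine mul_le_mul' le_rfl ?_
    calc ENNReal.ofReal |∫ u in cell n w k, f u|
        ≤ ∫⁻ x in cell n w k, (‖f x‖₊ : ℝ≥0∞) := by
          rw [← Real.norm_eq_abs, ofReal_norm, enorm_eq_nnnorm]
          exact enorm_integral_le_lintegral_enorm _
      _ = eLpNorm f 1 (volume.restrict (cell n w k)) := (eLpNorm_one_eq_lintegral_enorm (f := f)).symm
      _ ≤ I ^ (1/p) * V⁻¹ ^ (1 - 1/p) := h4
  calc ENNReal.ofReal |w ^ n * ∫ u in cell n w k, f u| ^ p
      ≤ (V * (I ^ (1/p) * V⁻¹ ^ (1 - 1/p))) ^ p := ENNReal.rpow_le_rpow base hp0.le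
    _ = V ^ p * (I * V⁻¹ ^ (p - 1)) := by
        rw [ENNReal.mul_rpow_of_nonneg _ _ hp0.le, ENNReal.mul_rpow_of_nonneg _ _ hp0.le,
          ← ENNReal.rpow_mul, ← ENNReal.rpow_mul,
          one_div, inv_mul_cancel₀ hp0.ne', ENNReal.rpow_one, sub_mul, one_mul,
          inv_mul_cancel₀ hp0.ne']
    _ = V * I := by
        rw [ENNReal.inv_rpow, ← ENNReal.rpow_neg, mul_comm I (V ^ (-(p-1))), ← mul_assoc,
          ← ENNReal.rpow_add _ _ hV0 hVt, show p + -(p-1) = 1 by ring, ENNReal.rpow_one]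

theorem stmt4 (n : ℕ) (χ f : EuclideanSpace ℝ (Fin n) → ℝ)
    (hχmeas : Measurable χ)
    (hχ1 : Integrable χ)
    (hχ0 : mom n χ 0 < ⊤)
    (p : ℝ) (hp : 1 ≤ p)
    (hf : MemLp f (ENNReal.ofReal p)) :
    ∀ w > (0:ℝ),
      (∀ᵐ x : EuclideanSpace ℝ (Fin n),
        Summable fun k : Fin n → ℤ =>
          χ (w • x - latticePt n k) * (w ^ n * ∫ u in cell n w k, f u)) ∧
      MemLp (SK n χ f w) (ENNReal.ofReal p) ∧
      eLpNorm (SK n χ f w) (ENNReal.ofReal p) volume ≤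
        (mom n χ 0) ^ ((p - 1) / p) * (eLpNorm χ 1 volume) ^ (1 / p) *
          eLpNorm f (ENNReal.ofReal p) volume := by
  intro w hw
  classical
  have hp0 : (0:ℝ) < p := lt_of_lt_of_le zero_lt_one hp
  have hP0 : ENNReal.ofReal p ≠ 0 := by
    simp only [ne_eq, ENNReal.ofReal_eq_zero, not_le]; linarith
  have hPt : ENNReal.ofReal p ≠ ⊤ := ENNReal.ofReal_ne_top
  have key : ∀ r : ℝ, ENNReal.ofReal |r| = (‖r‖₊ : ℝ≥0∞) := fun r => by
    rw [← Real.norm_eq_abs, ofReal_norm, enorm_eq_nnnorm]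
  set P := ENNReal.ofReal p with hPdef
  set a : (Fin n → ℤ) → ℝ := fun k => w ^ n * ∫ u in cell n w k, f u with ha
  set A : (Fin n → ℤ) → ℝ≥0∞ := fun k => ENNReal.ofReal |a k| with hA
  set χe : EuclideanSpace ℝ (Fin n) → ℝ≥0∞ := fun y => ENNReal.ofReal |χ y| with hχe
  have hχe_meas : Measurable χe := by fun_prop
  have haff : ∀ k : Fin n → ℤ, Measurable fun x : EuclideanSpace ℝ (Fin n) =>
      w • x - latticePt n k := fun k => by fun_prop
  have hterm : ∀ k : Fin n → ℤ, Measurable fun x : EuclideanSpace ℝ (Fin n) =>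
      χ (w • x - latticePt n k) * a k := fun k => (hχmeas.comp (haff k)).mul_const _
  have hχek : ∀ k : Fin n → ℤ, Measurable fun x : EuclideanSpace ℝ (Fin n) =>
      χe (w • x - latticePt n k) := fun k => hχe_meas.comp (haff k)
  set M := mom n χ 0 with hM
  have hMb : ∀ u : EuclideanSpace ℝ (Fin n),
      (∑' k : Fin n → ℤ, χe (u - latticePt n k)) ≤ M := by
    intro u
    have h := le_iSup (fun u : EuclideanSpace ℝ (Fin n) => ∑' k : Fin n → ℤ,
      ENNReal.ofReal (|χ (u - latticePt n k)| * ‖u - latticePt n k‖ ^ (0:ℝ))) u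
    rw [hM]
    unfold mom
    simpa [hχe, Real.rpow_zero] using h
  have hC1 : ∀ c : EuclideanSpace ℝ (Fin n),
      ∫⁻ x, χe (w • x - c) = ENNReal.ofReal ((w ^ n)⁻¹) * eLpNorm χ 1 volume := by
    intro c
    rw [lint_scale n χe hχe_meas c w hw]
    congr 1
    rw [eLpNorm_one_eq_lintegral_enorm]
    exact lintegral_congr fun y => key (χ y)
  have hfpm : AEMeasurable (fun x : EuclideanSpace ℝ (Fin n) => (‖f x‖₊ : ℝ≥0∞) ^ p) volume :=
    hf.1.enorm.pow_const p
  have hfP : (∫⁻ x, (‖f x‖₊ : ℝ≥0∞) ^ p) = eLpNorm f P volume ^ p := by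
    rw [hPdef, eLpNorm_eq_lintegral_rpow_enorm_toReal hP0 hPt, ENNReal.toReal_ofReal hp0.le,
      ← ENNReal.rpow_mul, one_div, inv_mul_cancel₀ hp0.ne', ENNReal.rpow_one]; rfl
  have hAsum : ∑' k : Fin n → ℤ, A k ^ p ≤ ENNReal.ofReal w ^ n * eLpNorm f P volume ^ p := by
    calc ∑' k : Fin n → ℤ, A k ^ p
        ≤ ∑' k : Fin n → ℤ, ENNReal.ofReal w ^ n *
          ∫⁻ x in cell n w k, (‖f x‖₊ : ℝ≥0∞) ^ p :=
          ENNReal.tsum_le_tsum fun k => Abound n hw hp f hf k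
      _ = ENNReal.ofReal w ^ n * ∑' k : Fin n → ℤ,
            ∫⁻ x in cell n w k, (‖f x‖₊ : ℝ≥0∞) ^ p := ENNReal.tsum_mul_left
      _ = ENNReal.ofReal w ^ n * eLpNorm f P volume ^ p := by
            rw [tile_cell n hw _ hfpm, hfP]
  set Φ : EuclideanSpace ℝ (Fin n) → ℝ≥0∞ :=
    fun x => ∑' k : Fin n → ℤ, χe (w • x - latticePt n k) * A k with hΦ
  set Ψ : EuclideanSpace ℝ (Fin n) → ℝ≥0∞ :=
    fun x => ∑' k : Fin n → ℤ, χe (w • x - latticePt n k) * A k ^ p with hΨ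
  have hΦm : Measurable Φ := Measurable.ennreal_tsum fun k => (hχek k).mul_const _
  have hΨm : Measurable Ψ := Measurable.ennreal_tsum fun k => (hχek k).mul_const _
  have hcancel : ENNReal.ofReal ((w ^ n)⁻¹) * ENNReal.ofReal w ^ n = 1 := by
    rw [← ENNReal.ofReal_pow hw.le, ENNReal.ofReal_inv_of_pos (pow_pos hw n)]
    exact ENNReal.inv_mul_cancel (ENNReal.ofReal_pos.2 (pow_pos hw n)).ne'
      ENNReal.ofReal_ne_top
  have hIntΨ : ∫⁻ x, Ψ x ≤ eLpNorm χ 1 volume * eLpNorm f P volume ^ p := by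
    calc ∫⁻ x, Ψ x
        = ∑' k : Fin n → ℤ, ∫⁻ x, χe (w • x - latticePt n k) * A k ^ p :=
          lintegral_tsum fun k => ((hχek k).mul_const _).aemeasurable
      _ = ∑' k : Fin n → ℤ, (∫⁻ x, χe (w • x - latticePt n k)) * A k ^ p :=
          tsum_congr fun k => lintegral_mul_const _ (hχek k)
      _ = ENNReal.ofReal ((w ^ n)⁻¹) * eLpNorm χ 1 volume * ∑' k : Fin n → ℤ, A k ^ p := by
          simp_rw [hC1]
          rw [← ENNReal.tsum_mul_left]
      _ ≤ ENNReal.ofReal ((w ^ n)⁻¹) * eLpNorm χ 1 volume *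
            (ENNReal.ofReal w ^ n * eLpNorm f P volume ^ p) :=
          mul_le_mul' le_rfl hAsum
      _ = eLpNorm χ 1 volume * eLpNorm f P volume ^ p := by
          rw [mul_comm (ENNReal.ofReal ((w ^ n)⁻¹)) (eLpNorm χ 1 volume), mul_assoc,
            ← mul_assoc (ENNReal.ofReal ((w ^ n)⁻¹)), hcancel, one_mul]
  have hΦp_le : ∀ x, Φ x ^ p ≤ M ^ (p - 1) * Ψ x := fun x => by
    refine (tsum_pow_le (fun k => χe (w • x - latticePt n k)) A hp).trans ?_
    exact mul_le_mul' (ENNReal.rpow_le_rpow (hMb (w • x)) (by linarith)) le_rfl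
  have hSKabs : ∀ x, ENNReal.ofReal |SK n χ f w x| ≤ Φ x := by
    intro x
    have h1 : SK n χ f w x = ∑' k : Fin n → ℤ, χ (w • x - latticePt n k) * a k := rfl
    rw [h1]
    refine (enorm_tsum_le' _).trans (le_of_eq (tsum_congr fun k => ?_))
    rw [abs_mul, ENNReal.ofReal_mul (abs_nonneg _)]
  have hmain : ∫⁻ x, ENNReal.ofReal |SK n χ f w x| ^ p ≤
      M ^ (p - 1) * (eLpNorm χ 1 volume * eLpNorm f P volume ^ p) := by
    calc ∫⁻ x, ENNReal.ofReal |SK n χ f w x| ^ p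
        ≤ ∫⁻ x, M ^ (p - 1) * Ψ x :=
          lintegral_mono fun x =>
            le_trans (ENNReal.rpow_le_rpow (hSKabs x) hp0.le) (hΦp_le x)
      _ = M ^ (p - 1) * ∫⁻ x, Ψ x := lintegral_const_mul _ hΨm
      _ ≤ _ := mul_le_mul' le_rfl hIntΨ
  have hMne : M ^ (p - 1) ≠ ⊤ := ENNReal.rpow_ne_top_of_nonneg (by linarith) hχ0.ne
  have hχfin : eLpNorm χ 1 volume < ⊤ := by
    rw [eLpNorm_one_eq_lintegral_enorm]; exact hχ1.2
  have hffin : eLpNorm f P volume ^ p ≠ ⊤ :=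
    ENNReal.rpow_ne_top_of_nonneg hp0.le hf.2.ne
  have hKfin : M ^ (p - 1) * (eLpNorm χ 1 volume * eLpNorm f P volume ^ p) ≠ ⊤ :=
    ENNReal.mul_ne_top hMne (ENNReal.mul_ne_top hχfin.ne hffin)
  have hΦae : ∀ᵐ x : EuclideanSpace ℝ (Fin n), Φ x < ⊤ := by
    have hint : ∫⁻ x, Φ x ^ p ≠ ⊤ := by
      refine ne_of_lt (lt_of_le_of_lt ?_ (lt_top_iff_ne_top.2 hKfin))
      calc ∫⁻ x, Φ x ^ p ≤ ∫⁻ x, M ^ (p - 1) * Ψ x := lintegral_mono hΦp_le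
        _ = M ^ (p - 1) * ∫⁻ x, Ψ x := lintegral_const_mul _ hΨm
        _ ≤ _ := mul_le_mul' le_rfl hIntΨ
    have h2 := ae_lt_top (hΦm.pow_const p) hint
    refine h2.mono fun x hx => ?_
    by_contra hxx
    rw [not_lt, top_le_iff] at hxx
    rw [hxx, ENNReal.top_rpow_of_pos hp0] at hx
    exact absurd hx (lt_irrefl ⊤)
  have hsummable : ∀ᵐ x : EuclideanSpace ℝ (Fin n),
      Summable fun k : Fin n → ℤ => χ (w • x - latticePt n k) * a k := by
    refine hΦae.mono fun x hx => ?_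
    have hne : (∑' k : Fin n → ℤ, (‖χ (w • x - latticePt n k) * a k‖₊ : ℝ≥0∞)) ≠ ⊤ := by
      refine ne_of_lt (lt_of_le_of_lt (le_of_eq ?_) hx)
      refine tsum_congr fun k => ?_
      rw [← key, abs_mul, ENNReal.ofReal_mul (abs_nonneg _)]
    exact Summable.of_nnnorm (ENNReal.tsum_coe_ne_top_iff_summable.1 hne)
  have hSKmeas : AEStronglyMeasurable (SK n χ f w) volume :=
    sk_aestronglyMeasurable volume
      (fun k x => χ (w • x - latticePt n k) * a k) hterm hsummable
  have heLp : eLpNorm (SK n χ f w) P volume ≤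
      M ^ ((p - 1) / p) * eLpNorm χ 1 volume ^ (1 / p) * eLpNorm f P volume := by
    rw [hPdef, eLpNorm_eq_lintegral_rpow_enorm_toReal hP0 hPt, ENNReal.toReal_ofReal hp0.le]
    have h1 : (∫⁻ x, (‖SK n χ f w x‖₊ : ℝ≥0∞) ^ p) ^ (1/p) ≤
        (M ^ (p - 1) * (eLpNorm χ 1 volume * eLpNorm f P volume ^ p)) ^ (1/p) := by
      refine ENNReal.rpow_le_rpow ?_ (by positivity)
      refine le_trans (le_of_eq (lintegral_congr fun x => by rw [← key])) hmain
    refine le_trans h1 (le_of_eq ?_)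
    rw [ENNReal.mul_rpow_of_nonneg _ _ (by positivity),
      ENNReal.mul_rpow_of_nonneg _ _ (by positivity),
      ← ENNReal.rpow_mul, ← ENNReal.rpow_mul, mul_one_div, mul_one_div,
      div_self hp0.ne', ENNReal.rpow_one, ← mul_assoc]
  refine ⟨hsummable, ⟨hSKmeas, ?_⟩, heLp⟩
  refine lt_of_le_of_lt heLp ?_
  refine ENNReal.mul_lt_top (ENNReal.mul_lt_top ?_ ?_) hf.2
  · exact ENNReal.rpow_lt_top_of_nonneg (div_nonneg (by linarith) hp0.le) hχ0.ne
  · exact ENNReal.rpow_lt_top_of_nonneg (one_div_nonneg.2 hp0.le) hχfin.ne
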